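/- Let G be a finite simple graph, let W = (v_0, v_1, …, v_k) be a walk in G, and suppose G has an edge between v_i and v_k for some index 0 ≤ i ≤ k − 2. Then the sequence (v_0, v_1, …, v_i, v_k, v_{k−1}, …, v_{i+1}) is also a walk in G, and it has the same multiset of vertices as W; in particular it has exactly the same unbounded vertices and the same number of unbounded vertices as W. -/

import Mathlib

open SimpleGraph

/-- Pósa rotation.  Decompose a walk `W = (v_0, …, v_k)` (a list whose consecutive entries are
adjacent) as `l₁ ++ l₂` with `l₁ = (v_0, …, v_i)` and `l₂ = (v_{i+1}, …, v_k)`; the condition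
`i ≤ k - 2` means `l₂` has at least two entries.  If `G` has an edge between `v_i` and `v_k`,
then the rotated sequence `(v_0, …, v_i, v_k, v_{k-1}, …, v_{i+1}) = l₁ ++ l₂.reverse` is also
a walk in `G` with the same multiset of vertices; in particular it has exactly the same
unbounded vertices (vertices occurring more than once) as `W`. -/
theorem posa_rotation
    {V : Type*} [DecidableEq V] (G : SimpleGraph V)
    (l₁ l₂ : List V) (vi vk : V)
    (hvi : l₁.getLast? = some vi) (hvk : l₂.getLast? = some vk)
    (hlen : 2 ≤ l₂.length)
    (hchain : (l₁ ++ l₂).Chain' G.Adj)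
    (hadj : G.Adj vi vk) :
    (l₁ ++ l₂.reverse).Chain' G.Adj ∧
    (↑(l₁ ++ l₂.reverse) : Multiset V) = (↑(l₁ ++ l₂) : Multiset V) ∧
    (∀ x : V, (l₁ ++ l₂.reverse).count x = (l₁ ++ l₂).count x) ∧
    (∀ x : V, 1 < (l₁ ++ l₂.reverse).count x ↔ 1 < (l₁ ++ l₂).count x) := by
  have hperm : (l₁ ++ l₂.reverse).Perm (l₁ ++ l₂) :=
    List.Perm.append_left l₁ (List.reverse_perm l₂)
  simp only [List.Chain', List.isChain_append] at hchain ⊢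
  obtain ⟨h1, h2, h3⟩ := hchain
  refine ⟨⟨h1, ?_, ?_⟩, Quot.sound hperm, fun x => hperm.count_eq x, fun x => by rw [hperm.count_eq x]⟩
  · rw [List.isChain_reverse]
    exact h2.imp fun a b hab => G.adj_symm hab
  · intro x hx y hy
    rw [List.head?_reverse] at hy
    rw [hvi] at hx
    rw [hvk] at hy
    simp only [Option.mem_def, Option.some.injEq] at hx hy
    subst hx; subst hy
    exact hadj
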